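/- Conversely, if a finite directed graph G admits a positive circulation (positive edge weights with weighted in-degree equal to weighted out-degree at every vertex), then G is weakly reversible: for every edge (u,v) there is a directed path from v back to u. -/

import Mathlib

open Finset

theorem stmt15 {V : Type*} [Fintype V] [DecidableEq V]
    (E : Finset (V × V))
    (w : V × V → ℝ) (hw : ∀ e ∈ E, 0 < w e)
    (hcirc : ∀ v : V, ∑ e ∈ E.filter (fun e => e.2 = v), w e
                    = ∑ e ∈ E.filter (fun e => e.1 = v), w e) :
    ∀ e ∈ E, Relation.ReflTransGen (fun a b => (a, b) ∈ E) e.2 e.1 := by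
  classical
  intro e he
  by_contra hnr
  set r : V → V → Prop := fun a b => (a, b) ∈ E with hr
  set S : Finset V := Finset.univ.filter (fun v => Relation.ReflTransGen r e.2 v) with hS
  have hmemS : ∀ v, v ∈ S ↔ Relation.ReflTransGen r e.2 v := by
    intro v; simp [hS]
  have hclosed : ∀ f ∈ E, f.1 ∈ S → f.2 ∈ S := by
    intro f hf h1
    rw [hmemS] at h1 ⊢
    exact h1.tail hf
  have hsum : ∑ f ∈ E.filter (fun f => f.2 ∈ S), w f
      = ∑ f ∈ E.filter (fun f => f.1 ∈ S), w f := by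
    rw [← Finset.sum_fiberwise_eq_sum_filter E S (fun f => f.2) w,
        ← Finset.sum_fiberwise_eq_sum_filter E S (fun f => f.1) w]
    exact Finset.sum_congr rfl fun v _ => hcirc v
  have hsub : E.filter (fun f => f.1 ∈ S) ⊆ E.filter (fun f => f.2 ∈ S) := by
    intro f hf
    simp only [Finset.mem_filter] at hf ⊢
    exact ⟨hf.1, hclosed f hf.1 hf.2⟩
  have hsd : ∑ f ∈ E.filter (fun f => f.2 ∈ S) \ E.filter (fun f => f.1 ∈ S), w f
      + ∑ f ∈ E.filter (fun f => f.1 ∈ S), w f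
      = ∑ f ∈ E.filter (fun f => f.2 ∈ S), w f := Finset.sum_sdiff hsub
  have hzero : ∑ f ∈ E.filter (fun f => f.2 ∈ S) \ E.filter (fun f => f.1 ∈ S), w f = 0 := by
    linarith [hsum, hsd]
  have hemem : e ∈ E.filter (fun f => f.2 ∈ S) \ E.filter (fun f => f.1 ∈ S) := by
    simp only [Finset.mem_sdiff, Finset.mem_filter]
    refine ⟨⟨he, (hmemS e.2).2 Relation.ReflTransGen.refl⟩, ?_⟩
    intro h
    exact hnr ((hmemS e.1).1 h.2)
  have hnonneg : ∀ f ∈ E.filter (fun f => f.2 ∈ S) \ E.filter (fun f => f.1 ∈ S), 0 ≤ w f := by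
    intro f hf
    simp only [Finset.mem_sdiff, Finset.mem_filter] at hf
    exact (hw f hf.1.1).le
  have := (Finset.sum_eq_zero_iff_of_nonneg hnonneg).1 hzero e hemem
  exact absurd this (ne_of_gt (hw e he))
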